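/- Let H be an abelian group and B a left brace. Let σ : (B,·) → Aut(H,+) be an injective group homomorphism and h : (H,+) → (B,+) a surjective group homomorphism such that h(σ(g)(m)) = λ_g(h(m)) for all g ∈ B and m ∈ H. Then the operation x·y := x + σ(h(x))(y) is a group operation on H (with neutral element 0 and inverse of x given by −σ(h(x)⁻¹)(x)) and together with + it makes H a left brace. -/

import Mathlib

/-- A left brace: an abelian group `(B,+)` and a group `(B,·)` such that
`a·(b+c)+a = a·b+a·c` for all `a b c`. -/
class LeftBrace (B : Type*) extends AddCommGroup B, Group B where
  left_brace : ∀ a b c : B, a * (b + c) + a = a * b + a * c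

lemma LeftBrace.zero_eq_one (B : Type*) [LeftBrace B] : (0 : B) = 1 := by
  have := LeftBrace.left_brace (1 : B) 0 0
  simp only [add_zero, one_mul] at this
  linear_combination (norm := abel) -this

/-- Given an abelian group `H`, a left brace `B`, an injective group homomorphism
`σ : (B,·) → Aut(H,+)` and a surjective additive homomorphism `h : (H,+) → (B,+)` with
`h(σ(g)(m)) = λ_g(h(m))`, the operation `x·y := x + σ(h(x))(y)` is a group operation on `H`
(with neutral element `0` and inverse of `x` equal to `−σ(h(x)⁻¹)(x)`) making `H`,
together with `+`, a left brace. -/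
theorem brace_structure_from_sigma_h (H : Type*) [AddCommGroup H] (B : Type*) [LeftBrace B]
    (σ : B →* Multiplicative (AddAut H)) (hσ : Function.Injective σ)
    (h : H →+ B) (hh : Function.Surjective h)
    (compat : ∀ (g : B) (m : H), h (Multiplicative.toAdd (σ g) m) = g * h m - g) :
    ∀ mul : H → H → H, (∀ x y : H, mul x y = x + Multiplicative.toAdd (σ (h x)) y) →
      (∀ x y z : H, mul (mul x y) z = mul x (mul y z)) ∧
      (∀ x : H, mul 0 x = x ∧ mul x 0 = x) ∧
      (∀ x : H, mul (-(Multiplicative.toAdd (σ ((h x)⁻¹)) x)) x = 0 ∧ mul x (-(Multiplicative.toAdd (σ ((h x)⁻¹)) x)) = 0) ∧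
      (∀ a b c : H, mul a (b + c) + a = mul a b + mul a c) := by
  intro mul hmul
  have hzo : (0 : B) = 1 := LeftBrace.zero_eq_one B
  have hmulh : ∀ x y : H, h (mul x y) = h x * h y := by
    intro x y
    rw [hmul, map_add, compat]
    abel
  refine ⟨?_, ?_, ?_, ?_⟩
  · intro x y z
    rw [hmul (mul x y) z, hmulh, hmul x y, hmul x (mul y z), hmul y z,
      map_add, map_mul]
    simp [add_assoc]
  · intro x
    constructor
    · rw [hmul, map_zero, hzo, map_one]
      simp
    · rw [hmul]
      simp
  · intro x
    have hinv : h (-(σ ((h x)⁻¹) x)) = (h x)⁻¹ := by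
      rw [map_neg, compat, inv_mul_cancel, ← hzo]
      abel
    constructor
    · rw [hmul, hinv]
      abel
    · rw [hmul, map_neg, ← AddAut.add_apply, ← toAdd_mul, ← map_mul, mul_inv_cancel, map_one]
      simp
  · intro a b c
    rw [hmul, hmul, hmul, map_add]
    abel
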